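/- arXiv:0907.5583 — 3 statements merged into one kernel-verified Lean document; each statement's English description precedes it below -/
import Mathlib

section
/- Let g and g' be symmetric positive definite real n×n matrices. Then there exists a unique real n×n matrix P which is self-adjoint with respect to g (i.e. g·P = Pᵀ·g) and positive definite with respect to g (i.e. xᵀ·g·P·x > 0 for every nonzero x ∈ ℝⁿ) such that g' = Pᵀ·g·P. (This is the Riemannian case of the theorem stating that the orthogonal reductions of the frame bundle determined by two metrics of the same signature are isomorphic: the congruence g' = Sᵀ·g·S can be realized by the unique positive factor P of the polar decomposition of S.) -/
set_option maxHeartbeats 1000000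


open Matrix
open scoped MatrixOrder

private lemma posDef_congr {n : ℕ} {A B : Matrix (Fin n) (Fin n) ℝ}
    (hA : A.PosDef) (hB : IsUnit B.det) : (Bᵀ * A * B).PosDef := by
  refine posDef_iff_dotProduct_mulVec.mpr ⟨?_, ?_⟩
  · have := isHermitian_conjTranspose_mul_mul B hA.1
    simpa [conjTranspose_eq_transpose_of_trivial] using this
  · intro x hx
    have hBx : B *ᵥ x ≠ 0 := by
      intro h
      have hinj := mulVec_injective_iff_isUnit.mpr ((isUnit_iff_isUnit_det B).mpr hB)
      exact hx (hinj (by simpa using h))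
    have := hA.dotProduct_mulVec_pos hBx
    simpa [Matrix.mul_assoc, ← mulVec_mulVec, dotProduct_mulVec, vecMul_transpose] using this

private lemma posDef_of_posSemidef_isUnit {n : ℕ} {A : Matrix (Fin n) (Fin n) ℝ}
    (hA : A.PosSemidef) (h : IsUnit A.det) : A.PosDef := by
  refine posDef_iff_dotProduct_mulVec.mpr ⟨hA.1, fun x hx => ?_⟩
  have hle := hA.dotProduct_mulVec_nonneg x
  rcases lt_or_eq_of_le hle with hlt | heq
  · exact hlt
  · exfalso
    have hz : A *ᵥ x = 0 := (hA.dotProduct_mulVec_zero_iff x).mp heq.symm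
    have hinj := mulVec_injective_iff_isUnit.mpr ((isUnit_iff_isUnit_det A).mpr h)
    exact hx (hinj (by simpa using hz))

/-- Riemannian case: given two symmetric positive definite matrices `g`, `g'`
(two metrics in a common frame), there is a unique matrix `P` which is
`g`-self-adjoint and `g`-positive definite with `g' = Pᵀ * g * P`. -/
theorem metrics_related_by_unique_positive_factor (n : ℕ)
    (g g' : Matrix (Fin n) (Fin n) ℝ)
    (hg_symm : gᵀ = g)
    (hg_pos : ∀ x : Fin n → ℝ, x ≠ 0 → 0 < x ⬝ᵥ g.mulVec x)
    (hg'_symm : g'ᵀ = g')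
    (hg'_pos : ∀ x : Fin n → ℝ, x ≠ 0 → 0 < x ⬝ᵥ g'.mulVec x) :
    ∃! P : Matrix (Fin n) (Fin n) ℝ,
      g * P = Pᵀ * g ∧
      (∀ x : Fin n → ℝ, x ≠ 0 → 0 < x ⬝ᵥ (g * P).mulVec x) ∧
      g' = Pᵀ * g * P := by
  have hg : g.PosDef := posDef_iff_dotProduct_mulVec.mpr ⟨by simpa [Matrix.IsHermitian,
      conjTranspose_eq_transpose_of_trivial] using hg_symm,
    fun x hx => by simpa using hg_pos x hx⟩
  have hg' : g'.PosDef := posDef_iff_dotProduct_mulVec.mpr ⟨by simpa [Matrix.IsHermitian,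
      conjTranspose_eq_transpose_of_trivial] using hg'_symm,
    fun x hx => by simpa using hg'_pos x hx⟩
  set R := CFC.sqrt g with hRdef
  have hRsd : R.PosSemidef := (CFC.sqrt_nonneg g).posSemidef
  have hRR : R * R = g := CFC.sqrt_mul_sqrt_self g hg.posSemidef.nonneg
  have hRsymm : Rᵀ = R := by
    simpa [conjTranspose_eq_transpose_of_trivial] using hRsd.1.eq
  have hgdet : IsUnit g.det := hg.det_pos.ne'.isUnit
  have hRdet : IsUnit R.det := by
    have h2 : R.det * R.det = g.det := by rw [← det_mul, hRR]
    exact isUnit_of_mul_isUnit_left (h2.symm ▸ hgdet)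
  have hRinv_symm : R⁻¹ᵀ = R⁻¹ := by rw [transpose_nonsing_inv, hRsymm]
  have hRinvdet : IsUnit R⁻¹.det := R.isUnit_nonsing_inv_det hRdet
  have hM : (R⁻¹ * g' * R⁻¹).PosDef := by
    have := posDef_congr hg' hRinvdet
    rwa [hRinv_symm] at this
  set M := R⁻¹ * g' * R⁻¹ with hMdef
  set T := CFC.sqrt M with hTdef
  have hTsd : T.PosSemidef := (CFC.sqrt_nonneg M).posSemidef
  have hTT : T * T = M := CFC.sqrt_mul_sqrt_self M hM.posSemidef.nonneg
  have hTsymm : Tᵀ = T := by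
    simpa [conjTranspose_eq_transpose_of_trivial] using hTsd.1.eq
  have hTdet : IsUnit T.det := by
    have h2 : T.det * T.det = M.det := by rw [← det_mul, hTT]
    exact isUnit_of_mul_isUnit_left (h2.symm ▸ hM.det_pos.ne'.isUnit)
  have hT : T.PosDef := posDef_of_posSemidef_isUnit hTsd hTdet
  clear_value T
  clear_value R
  refine ⟨R⁻¹ * T * R, ⟨?_, ?_, ?_⟩, ?_⟩
  · -- g-self-adjointness
    have hPt : (R⁻¹ * T * R)ᵀ = R * T * R⁻¹ := by
      simp [transpose_mul, hRsymm, hTsymm, hRinv_symm, Matrix.mul_assoc]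
    rw [hPt, ← hRR]
    simp [Matrix.mul_assoc, mul_nonsing_inv_cancel_left _ _ hRdet,
      nonsing_inv_mul_cancel_left _ _ hRdet]
  · -- g-positivity
    intro x hx
    have hgP : g * (R⁻¹ * T * R) = Rᵀ * T * R := by
      rw [hRsymm, ← hRR]
      simp [Matrix.mul_assoc, mul_nonsing_inv_cancel_left _ _ hRdet]
    rw [hgP]
    simpa using (posDef_congr hT hRdet).dotProduct_mulVec_pos hx
  · -- congruence
    have hPt : (R⁻¹ * T * R)ᵀ = R * T * R⁻¹ := by
      simp [transpose_mul, hRsymm, hTsymm, hRinv_symm, Matrix.mul_assoc]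
    rw [hPt]
    have h1 : R * T * R⁻¹ * g * (R⁻¹ * T * R) = R * (T * T) * R := by
      rw [← hRR]
      simp only [Matrix.mul_assoc]
      rw [nonsing_inv_mul_cancel_left _ _ hRdet, mul_nonsing_inv_cancel_left _ _ hRdet]
    have h2 : R * (R⁻¹ * g' * R⁻¹) * R = g' := by
      simp only [Matrix.mul_assoc]
      rw [nonsing_inv_mul _ hRdet, Matrix.mul_one, mul_nonsing_inv_cancel_left _ _ hRdet]
    rw [h1, hTT, hMdef]
    exact h2.symm
  · -- uniqueness
    rintro Q ⟨hq1, hq2, hq3⟩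
    have hSsymm : (g * Q)ᵀ = g * Q := by rw [transpose_mul, hg_symm, ← hq1]
    have hS : (g * Q).PosDef := posDef_iff_dotProduct_mulVec.mpr ⟨by simpa [Matrix.IsHermitian,
        conjTranspose_eq_transpose_of_trivial] using hSsymm,
      fun x hx => by simpa using hq2 x hx⟩
    -- T' = R⁻¹ * (g * Q) * R⁻¹ = R * Q * R⁻¹
    have hT'eq : R⁻¹ * (g * Q) * R⁻¹ = R * (Q * R⁻¹) := by
      rw [← hRR]
      simp [Matrix.mul_assoc, nonsing_inv_mul_cancel_left _ _ hRdet]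
    have hT'sd : (R⁻¹ * (g * Q) * R⁻¹).PosSemidef := by
      have := posDef_congr hS hRinvdet
      rw [hRinv_symm] at this
      exact this.posSemidef
    have hsq : (R⁻¹ * (g * Q) * R⁻¹) ^ 2 = M := by
      rw [pow_two, hT'eq, hMdef, hq3, ← hq1]
      rw [← hRR]
      simp [Matrix.mul_assoc, nonsing_inv_mul_cancel_left _ _ hRdet,
        mul_nonsing_inv_cancel_left _ _ hRdet]
    have hT'T : R⁻¹ * (g * Q) * R⁻¹ = T := by
      rw [hTdef]
      exact (CFC.sqrt_unique (by rw [← pow_two]; exact hsq) hT'sd.nonneg).symm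
    rw [hT'eq] at hT'T
    -- Q = R⁻¹ * T * R
    have hQ : Q = R⁻¹ * (R * (Q * R⁻¹)) * R := by
      simp only [Matrix.mul_assoc]
      rw [nonsing_inv_mul_cancel_left _ _ hRdet, nonsing_inv_mul _ hRdet, Matrix.mul_one]
    rw [← hT'T]
    exact hQ
end

section
/- Let g₊, g₊' be symmetric positive definite real p×p matrices and g₋, g₋' symmetric positive definite real q×q matrices, and form the pseudoriemannian Gram matrices g = diag(g₊, −g₋) and g' = diag(g₊', −g₋') of signature (p,q), block diagonal with respect to a fixed splitting ℝ^{p+q} = ℝ^p ⊕ ℝ^q. Then there exists a unique block-diagonal matrix P = diag(P₊, P₋), where P₊ is g₊-self-adjoint and g₊-positive definite and P₋ is g₋-self-adjoint and g₋-positive definite, such that g' = Pᵀ·g·P. (This is the pseudoriemannian case of the theorem on isomorphism of the two O(p,q)-reductions of the frame bundle: after reducing to the maximal compact subgroup O(p)×O(q), the tangent bundle splits and the polar decomposition argument applies blockwise.) -/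
open Matrix


variable {n : Type*} [Fintype n] [DecidableEq n]

section sqrtShim
open scoped MatrixOrder

noncomputable def Matrix.PosSemidef.sqrt {A : Matrix n n ℝ} (_hA : A.PosSemidef) :
    Matrix n n ℝ := CFC.sqrt A

lemma Matrix.PosSemidef.sqrt_mul_self {A : Matrix n n ℝ} (hA : A.PosSemidef) :
    hA.sqrt * hA.sqrt = A :=
  CFC.sqrt_mul_sqrt_self A (Matrix.nonneg_iff_posSemidef.2 hA)

lemma Matrix.PosSemidef.posSemidef_sqrt {A : Matrix n n ℝ} (hA : A.PosSemidef) :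
    hA.sqrt.PosSemidef :=
  Matrix.nonneg_iff_posSemidef.1 (CFC.sqrt_nonneg A)

lemma Matrix.PosSemidef.eq_sqrt_of_sq_eq {A B : Matrix n n ℝ} (hA : A.PosSemidef)
    (hB : B.PosSemidef) (hAB : A ^ 2 = B) : A = hB.sqrt :=
  (CFC.sqrt_unique (a := B) (b := A) (by rw [← pow_two, hAB])
    (Matrix.nonneg_iff_posSemidef.2 hA)).symm

end sqrtShim

lemma conjT_real {m k : Type*} (B : Matrix m k ℝ) : Bᴴ = Bᵀ := by
  ext i j; simp [conjTranspose_apply]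

lemma real_posDef_iff {M : Matrix n n ℝ} :
    M.PosDef ↔ Mᵀ = M ∧ ∀ x : n → ℝ, x ≠ 0 → 0 < x ⬝ᵥ M.mulVec x := by
  constructor
  · intro h; obtain ⟨h1, h2⟩ := posDef_iff_dotProduct_mulVec.1 h
    refine ⟨?_, fun x hx => ?_⟩
    · rw [← conjT_real]; exact h1
    · simpa using h2 hx
  · rintro ⟨h1, h2⟩
    refine posDef_iff_dotProduct_mulVec.2 ⟨?_, fun x hx => ?_⟩
    · rw [IsHermitian, conjT_real]; exact h1
    · simpa using h2 x hx

lemma posDef_of_posSemidef_isUnit_s2 {S : Matrix n n ℝ} (hS : S.PosSemidef)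
    (hU : IsUnit S) : S.PosDef := by
  refine PosDef.of_dotProduct_mulVec_pos hS.1 (fun x hx => ?_)
  set R := hS.sqrt with hRdef
  have hRsq : R * R = S := hS.sqrt_mul_self
  have hRherm : R.IsHermitian := hS.posSemidef_sqrt.1
  have hRU : IsUnit R := by
    rw [Matrix.isUnit_iff_isUnit_det]
    have hdet : R.det * R.det = S.det := by rw [← det_mul, hRsq]
    rw [Matrix.isUnit_iff_isUnit_det] at hU
    exact isUnit_of_mul_isUnit_left (hdet ▸ hU)
  have hRx : R *ᵥ x ≠ 0 :=
    (Matrix.mulVec_injective_iff_isUnit.2 hRU).ne_iff' (by simp) |>.2 hx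
  have key : star x ⬝ᵥ S *ᵥ x = star (R *ᵥ x) ⬝ᵥ (R *ᵥ x) := by
    have h1 : S *ᵥ x = R *ᵥ (R *ᵥ x) := by rw [mulVec_mulVec, hRsq]
    rw [h1, star_mulVec, dotProduct_mulVec, hRherm.eq]
  rw [key]
  exact dotProduct_star_self_pos_iff.2 hRx

lemma posDef_conj {A B : Matrix n n ℝ} (hA : A.PosDef) (hB : IsUnit B) :
    (Bᵀ * A * B).PosDef := by
  have h : (Bᴴ * A * B).PosSemidef := hA.posSemidef.conjTranspose_mul_mul_same B
  rw [conjT_real] at h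
  refine posDef_of_posSemidef_isUnit_s2 h ?_
  rw [Matrix.isUnit_iff_isUnit_det, det_mul, det_mul, det_transpose]
  rw [Matrix.isUnit_iff_isUnit_det] at hB
  exact (hB.mul ((Matrix.isUnit_iff_isUnit_det A).1 hA.isUnit)).mul hB

lemma posDef_sqrt' {A : Matrix n n ℝ} (hA : A.PosDef) : hA.posSemidef.sqrt.PosDef := by
  refine posDef_of_posSemidef_isUnit_s2 hA.posSemidef.posSemidef_sqrt ?_
  rw [Matrix.isUnit_iff_isUnit_det]
  have hdet : hA.posSemidef.sqrt.det * hA.posSemidef.sqrt.det = A.det := by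
    rw [← det_mul, hA.posSemidef.sqrt_mul_self]
  exact isUnit_of_mul_isUnit_left (hdet ▸ (Matrix.isUnit_iff_isUnit_det A).1 hA.isUnit)

lemma riem_key {g g' : Matrix n n ℝ} (hg : g.PosDef) (hg' : g'.PosDef) :
    ∃! Q : Matrix n n ℝ, g * Q = Qᵀ * g ∧ (g * Q).PosDef ∧ g' = Qᵀ * g * Q := by
  have hgsymm : gᵀ = g := (real_posDef_iff.1 hg).1
  set R := hg.posSemidef.sqrt with hRdef
  have hRsq : R * R = g := hg.posSemidef.sqrt_mul_self
  have hRherm : Rᵀ = R := (real_posDef_iff.1 (posDef_sqrt' hg)).1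
  have hRpd : R.PosDef := posDef_sqrt' hg
  haveI : Invertible R := hRpd.isUnit.invertible
  haveI : Invertible g := hg.isUnit.invertible
  haveI : Invertible Rᵀ := hRherm ▸ ‹Invertible R›
  have hRinv_symm : (R⁻¹)ᵀ = R⁻¹ := by rw [transpose_nonsing_inv, hRherm]
  haveI : Invertible (R⁻¹) := (isUnit_nonsing_inv_iff.2 hRpd.isUnit).invertible
  have hM : (R⁻¹ * g' * R⁻¹).PosDef := by
    have := posDef_conj hg' (isUnit_nonsing_inv_iff.2 hRpd.isUnit)
    rwa [hRinv_symm] at this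
  set N := hM.posSemidef.sqrt with hNdef
  have hNsq : N * N = R⁻¹ * g' * R⁻¹ := hM.posSemidef.sqrt_mul_self
  have hNherm : Nᵀ = N := (real_posDef_iff.1 (posDef_sqrt' hM)).1
  have hNpd : N.PosDef := posDef_sqrt' hM
  set S := R * N * R with hSdef
  have hSsymm : Sᵀ = S := by
    rw [hSdef, transpose_mul, transpose_mul, hRherm, hNherm, mul_assoc]
  have hSpd : S.PosDef := by
    have := posDef_conj hNpd hRpd.isUnit
    rwa [hRherm] at this
  have hginv : g⁻¹ = R⁻¹ * R⁻¹ := by rw [← hRsq, Matrix.mul_inv_rev]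
  have hginv_symm : (g⁻¹)ᵀ = g⁻¹ := by rw [transpose_nonsing_inv, hgsymm]
  have hSconj : S * g⁻¹ * S = g' := by
    rw [hginv, hSdef]
    have e1 : R * N * R * (R⁻¹ * R⁻¹) * (R * N * R)
        = R * (N * ((R * R⁻¹) * ((R⁻¹ * R) * N))) * R := by noncomm_ring
    rw [e1, Matrix.mul_inv_of_invertible, Matrix.inv_mul_of_invertible, one_mul, one_mul]
    rw [hNsq]
    have e3 : R * (R⁻¹ * g' * R⁻¹) * R = (R * R⁻¹) * g' * (R⁻¹ * R) := by noncomm_ring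
    rw [e3, Matrix.mul_inv_of_invertible, Matrix.inv_mul_of_invertible, one_mul, mul_one]
  refine ⟨g⁻¹ * S, ⟨?_, ?_, ?_⟩, ?_⟩
  · rw [Matrix.mul_inv_cancel_left_of_invertible, transpose_mul, hSsymm, hginv_symm,
      mul_assoc, Matrix.inv_mul_of_invertible, mul_one]
  · rw [Matrix.mul_inv_cancel_left_of_invertible]; exact hSpd
  · rw [transpose_mul, hSsymm, hginv_symm]
    calc g' = S * g⁻¹ * S := hSconj.symm
      _ = S * g⁻¹ * g * (g⁻¹ * S) := by
          rw [mul_assoc (S * g⁻¹), Matrix.mul_inv_cancel_left_of_invertible]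
  · rintro Q ⟨h1, h2, h3⟩
    set T := R⁻¹ * (g * Q) * R⁻¹ with hTdef
    have hTpd : T.PosDef := by
      have := posDef_conj h2 (isUnit_nonsing_inv_iff.2 hRpd.isUnit)
      rwa [hRinv_symm] at this
    have hTsq : T * T = R⁻¹ * g' * R⁻¹ := by
      have hgq : g' = (g * Q) * g⁻¹ * (g * Q) := by
        calc g' = Qᵀ * g * Q := h3
          _ = (Qᵀ * g) * (g⁻¹ * (g * Q)) := by
              rw [Matrix.inv_mul_cancel_left_of_invertible]
          _ = (g * Q) * (g⁻¹ * (g * Q)) := by rw [← h1]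
          _ = (g * Q) * g⁻¹ * (g * Q) := by noncomm_ring
      rw [hTdef, hgq]
      have : R⁻¹ * (g * Q) * R⁻¹ * (R⁻¹ * (g * Q) * R⁻¹)
          = R⁻¹ * ((g * Q) * (R⁻¹ * R⁻¹) * (g * Q)) * R⁻¹ := by noncomm_ring
      rw [this, ← hginv]
    have hTN : T = N := hTpd.posSemidef.eq_sqrt_of_sq_eq hM.posSemidef (by rw [pow_two, hTsq])
    have hSgq : g * Q = S := by
      have e : R * T * R = R * N * R := by rw [hTN]
      have e2 : R * (R⁻¹ * (g * Q) * R⁻¹) * R = (R * R⁻¹) * (g * Q) * (R⁻¹ * R) := by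
        noncomm_ring
      have e3 : g * Q = R * T * R := by
        rw [hTdef, e2, Matrix.mul_inv_of_invertible, Matrix.inv_mul_of_invertible,
          one_mul, mul_one]
      rw [e3, e, ← hSdef]
    rw [← hSgq, Matrix.inv_mul_cancel_left_of_invertible]

/-- Pseudoriemannian case: for block-diagonal Gram matrices
`g = diag(g₊, −g₋)` and `g' = diag(g₊', −g₋')` of signature `(p,q)`, there is a
unique block-diagonal matrix `P = diag(P₊, P₋)` with `P₊` `g₊`-self-adjoint and
`g₊`-positive definite, `P₋` `g₋`-self-adjoint and `g₋`-positive definite, such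
that `g' = Pᵀ * g * P`. -/
theorem pseudoriemannian_metrics_related_by_unique_block_positive_factor
    (p q : ℕ)
    (gp gp' : Matrix (Fin p) (Fin p) ℝ) (gm gm' : Matrix (Fin q) (Fin q) ℝ)
    (hgp_symm : gpᵀ = gp)
    (hgp_pos : ∀ x : Fin p → ℝ, x ≠ 0 → 0 < x ⬝ᵥ gp.mulVec x)
    (hgp'_symm : gp'ᵀ = gp')
    (hgp'_pos : ∀ x : Fin p → ℝ, x ≠ 0 → 0 < x ⬝ᵥ gp'.mulVec x)
    (hgm_symm : gmᵀ = gm)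
    (hgm_pos : ∀ x : Fin q → ℝ, x ≠ 0 → 0 < x ⬝ᵥ gm.mulVec x)
    (hgm'_symm : gm'ᵀ = gm')
    (hgm'_pos : ∀ x : Fin q → ℝ, x ≠ 0 → 0 < x ⬝ᵥ gm'.mulVec x) :
    ∃! PQ : Matrix (Fin p) (Fin p) ℝ × Matrix (Fin q) (Fin q) ℝ,
      (gp * PQ.1 = (PQ.1)ᵀ * gp) ∧
      (∀ x : Fin p → ℝ, x ≠ 0 → 0 < x ⬝ᵥ (gp * PQ.1).mulVec x) ∧
      (gm * PQ.2 = (PQ.2)ᵀ * gm) ∧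
      (∀ x : Fin q → ℝ, x ≠ 0 → 0 < x ⬝ᵥ (gm * PQ.2).mulVec x) ∧
      Matrix.fromBlocks gp' 0 0 (-gm') =
        (Matrix.fromBlocks PQ.1 0 0 PQ.2)ᵀ *
          Matrix.fromBlocks gp 0 0 (-gm) *
          Matrix.fromBlocks PQ.1 0 0 PQ.2 := by
  have hgpPD : gp.PosDef := real_posDef_iff.2 ⟨hgp_symm, hgp_pos⟩
  have hgp'PD : gp'.PosDef := real_posDef_iff.2 ⟨hgp'_symm, hgp'_pos⟩
  have hgmPD : gm.PosDef := real_posDef_iff.2 ⟨hgm_symm, hgm_pos⟩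
  have hgm'PD : gm'.PosDef := real_posDef_iff.2 ⟨hgm'_symm, hgm'_pos⟩
  obtain ⟨Qp, ⟨hp1, hp2, hp3⟩, hpu⟩ := riem_key hgpPD hgp'PD
  obtain ⟨Qm, ⟨hm1, hm2, hm3⟩, hmu⟩ := riem_key hgmPD hgm'PD
  have blockeq : ∀ (A : Matrix (Fin p) (Fin p) ℝ) (B : Matrix (Fin q) (Fin q) ℝ),
      (Matrix.fromBlocks A 0 0 B)ᵀ * Matrix.fromBlocks gp 0 0 (-gm) *
        Matrix.fromBlocks A 0 0 B
      = Matrix.fromBlocks (Aᵀ * gp * A) 0 0 (-(Bᵀ * gm * B)) := by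
    intro A B
    rw [fromBlocks_transpose, fromBlocks_multiply, fromBlocks_multiply]
    simp [mul_neg, neg_mul]
  refine ⟨(Qp, Qm), ⟨hp1, (real_posDef_iff.1 hp2).2, hm1, (real_posDef_iff.1 hm2).2, ?_⟩, ?_⟩
  · rw [blockeq, ← hp3, ← hm3]
  · rintro ⟨A, B⟩ ⟨h1, h2, h3, h4, h5⟩
    replace h1 : gp * A = Aᵀ * gp := h1
    replace h2 : ∀ x : Fin p → ℝ, x ≠ 0 → 0 < x ⬝ᵥ (gp * A).mulVec x := h2
    replace h3 : gm * B = Bᵀ * gm := h3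
    replace h4 : ∀ x : Fin q → ℝ, x ≠ 0 → 0 < x ⬝ᵥ (gm * B).mulVec x := h4
    replace h5 : Matrix.fromBlocks gp' 0 0 (-gm') =
        (Matrix.fromBlocks A 0 0 B)ᵀ * Matrix.fromBlocks gp 0 0 (-gm) *
          Matrix.fromBlocks A 0 0 B := h5
    rw [blockeq] at h5
    have h6 := (fromBlocks_inj.1 h5)
    have hA : A = Qp := by
      refine hpu A ⟨h1, real_posDef_iff.2 ⟨?_, h2⟩, h6.1⟩
      rw [h1, transpose_mul, hgp_symm, transpose_transpose]
      exact h1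
    have hB : B = Qm := by
      refine hmu B ⟨h3, real_posDef_iff.2 ⟨?_, h4⟩, ?_⟩
      · rw [h3, transpose_mul, hgm_symm, transpose_transpose]
        exact h3
      · have := h6.2.2.2
        exact neg_injective this
    simp [hA, hB]
end

section
/- Fix N ∈ ℝ and on ℝ³ define the 1-forms E¹(p)(v) = v₁, E²(p)(v) = v₂, E³(p)(v) = v₃ + N·p₁·v₂. Define the antisymmetric connection 1-forms ω^a{}_b (a,b ∈ {1,2,3}, ω^a{}_b = −ω^b{}_a) by ω¹₂ = −(N/2)E³, ω¹₃ = −(N/2)E², ω²₃ = (N/2)E¹. Then the torsionless condition holds: for each a ∈ {1,2,3} and all p, u, v ∈ ℝ³, dE^a(p)(u,v) + Σ_b (ω^a{}_b ∧ E^b)(p)(u,v) = 0. (Thus ω is the Levi–Civita connection of the twisted metric ds'² = dx² + dy² + (dz + N x dy)².) -/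
noncomputable section

/-- Exterior derivative of a 1-form on `ℝ^m`. -/
def exd {m : ℕ} (η : (Fin m → ℝ) → ((Fin m → ℝ) →L[ℝ] ℝ))
    (p u v : Fin m → ℝ) : ℝ :=
  (fderiv ℝ η p u) v - (fderiv ℝ η p v) u

/-- Wedge product of two 1-forms on `ℝ^m`. -/
def wedge {m : ℕ} (η ξ : (Fin m → ℝ) → ((Fin m → ℝ) →L[ℝ] ℝ))
    (p u v : Fin m → ℝ) : ℝ :=
  η p u * ξ p v - η p v * ξ p u

/-- The twisted vielbein `E¹ = dx`, `E² = dy`, `E³ = dz + N x dy`. -/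
def E (N : ℝ) : Fin 3 → (Fin 3 → ℝ) → ((Fin 3 → ℝ) →L[ℝ] ℝ) :=
  ![fun _ => ContinuousLinearMap.proj 0,
    fun _ => ContinuousLinearMap.proj 1,
    fun p => ContinuousLinearMap.proj 2 + (N * p 0) • ContinuousLinearMap.proj 1]

/-- The antisymmetric connection 1-forms `ω¹₂ = −(N/2)E³`, `ω¹₃ = −(N/2)E²`,
`ω²₃ = (N/2)E¹` (indices `1,2,3` realized as `0,1,2 : Fin 3`). -/
def ω (N : ℝ) : Fin 3 → Fin 3 → (Fin 3 → ℝ) → ((Fin 3 → ℝ) →L[ℝ] ℝ) :=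
  ![![fun _ => 0, fun p => (-(N / 2)) • E N 2 p, fun p => (-(N / 2)) • E N 1 p],
    ![fun p => (N / 2) • E N 2 p, fun _ => 0, fun p => (N / 2) • E N 0 p],
    ![fun p => (N / 2) • E N 1 p, fun p => (-(N / 2)) • E N 0 p, fun _ => 0]]


lemma exd_const {m : ℕ} (c : (Fin m → ℝ) →L[ℝ] ℝ) (p u v : Fin m → ℝ) :
    exd (fun _ => c) p u v = 0 := by
  simp [exd, fderiv_const]

lemma hE2 (N : ℝ) (p : Fin 3 → ℝ) :
    HasFDerivAt (fun p : Fin 3 → ℝ =>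
        (ContinuousLinearMap.proj 2 : (Fin 3 → ℝ) →L[ℝ] ℝ)
          + (N * p 0) • (ContinuousLinearMap.proj 1 : (Fin 3 → ℝ) →L[ℝ] ℝ))
      (ContinuousLinearMap.smulRight
        (N • (ContinuousLinearMap.proj 0 : (Fin 3 → ℝ) →L[ℝ] ℝ))
        (ContinuousLinearMap.proj 1 : (Fin 3 → ℝ) →L[ℝ] ℝ)) p := by
  have h := ((hasFDerivAt_const (ContinuousLinearMap.proj 2 : (Fin 3 → ℝ) →L[ℝ] ℝ) p).add
    ((((ContinuousLinearMap.proj 0 : (Fin 3 → ℝ) →L[ℝ] ℝ).hasFDerivAt (x := p)).const_mul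
      N).smul_const (ContinuousLinearMap.proj 1 : (Fin 3 → ℝ) →L[ℝ] ℝ)))
  convert h using 2 <;> ext <;> simp [mul_comm]

lemma exdE2' (N : ℝ) (p u v : Fin 3 → ℝ) :
    exd (fun p : Fin 3 → ℝ =>
        (ContinuousLinearMap.proj 2 : (Fin 3 → ℝ) →L[ℝ] ℝ)
          + (N * p 0) • (ContinuousLinearMap.proj 1 : (Fin 3 → ℝ) →L[ℝ] ℝ)) p u v
      = (N * u 0) * v 1 - (N * v 0) * u 1 := by
  rw [exd, (hE2 N p).fderiv]
  simp [mul_comm, mul_assoc]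

/-- The torsionless condition `dE^a + ω^a{}_b ∧ E^b = 0` holds for the twisted
vielbein `E` and the connection `ω`: thus `ω` is the Levi–Civita connection of
the twisted metric `ds'² = dx² + dy² + (dz + N x dy)²`. -/
theorem twisted_torus_levi_civita (N : ℝ) (a : Fin 3) (p u v : Fin 3 → ℝ) :
    exd (E N a) p u v + ∑ b : Fin 3, wedge (ω N a b) (E N b) p u v = 0 := by
  fin_cases a <;>
  · rw [Fin.sum_univ_three]
    simp only [E, ω, Matrix.cons_val_zero, Matrix.cons_val_one, Matrix.head_cons,
      Matrix.cons_val_two, Matrix.tail_cons, Fin.mk_zero, Fin.mk_one, Fin.isValue]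
    simp [wedge, exd_const, exdE2']
    ring

end
end
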